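/- Let a > 0, d ≥ 2, Ω = [−a,a]^d, k ∈ {1,…,d−1}, l ≤ min(k, d−k), and σ₁,…,σ_l ≥ 0. Define f_j(x) = exp(−σ_j·x_j·x_{k+j}) for j = 1,…,l. Let p₁,…,p_l : ℝ^d → ℝ be bounded measurable functions, let δ_j := sup_{x ∈ Ω} |f_j(x) − p_j(x)| and set ε_j := δ_j·exp(σ_j·a²). Then for every f* ∈ L²(Ω) and every κ ∈ {0,1,…,l}: ‖f*·p₁⋯p_κ‖_{L²(Ω)} ≤ (∏_{j=1}^{κ} (1 + ε_j)) · ‖f*·f₁⋯f_κ‖_{L²(Ω)}. -/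

import Mathlib

open MeasureTheory Matrix

noncomputable section

/-- Evaluation of a Tensor-Train decomposition with ranks `r 0, …, r d`:
`T(i₁,…,i_d) = G₁(i₁)⋯G_d(i_d)` written as a sum over all intermediate indices. -/
def ttEval {d : ℕ} {n : Fin d → ℕ} (r : ℕ → ℕ)
    (G : ∀ j : Fin d, Fin (n j) → Fin (r j.1) → Fin (r (j.1 + 1)) → ℝ)
    (i : ∀ j, Fin (n j)) : ℝ :=
  ∑ α : ∀ j : Fin (d + 1), Fin (r j.1),
    ∏ j : Fin d, G j (i j) (α ⟨j.1, by omega⟩) (α ⟨j.1 + 1, by omega⟩)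

/-- `(G, r)` is a Tensor-Train decomposition of the tensor `T` (with ranks `r 0 = r d = 1`). -/
def IsTTRep {d : ℕ} {n : Fin d → ℕ} (T : (∀ j, Fin (n j)) → ℝ) (r : ℕ → ℕ)
    (G : ∀ j : Fin d, Fin (n j) → Fin (r j.1) → Fin (r (j.1 + 1)) → ℝ) : Prop :=
  r 0 = 1 ∧ r d = 1 ∧ ∀ i, T i = ttEval r G i

/-- The `l`-matricization of a tensor: rows are indexed by the first `l` indices,
columns by the remaining ones. -/
def matricize {d : ℕ} {n : Fin d → ℕ} (T : (∀ j, Fin (n j)) → ℝ) (l : ℕ) :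
    Matrix (∀ j : {j : Fin d // j.1 < l}, Fin (n j.1))
      (∀ j : {j : Fin d // ¬ j.1 < l}, Fin (n j.1)) ℝ :=
  fun x y => T fun j => if h : j.1 < l then x ⟨j, h⟩ else y ⟨j, h⟩

/-- Evaluation of a functional Tensor-Train (FTT) decomposition with cores `γ`. -/
def fttEval {d : ℕ} (r : ℕ → ℕ)
    (γ : ∀ j : Fin d, Fin (r j.1) → ℝ → Fin (r (j.1 + 1)) → ℝ)
    (x : Fin d → ℝ) : ℝ :=
  ∑ α : ∀ j : Fin (d + 1), Fin (r j.1),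
    ∏ j : Fin d, γ j (α ⟨j.1, by omega⟩) (x j) (α ⟨j.1 + 1, by omega⟩)

/-- `f` has an FTT representation (almost everywhere) with measurable cores `γ`
and ranks `r 0 = 1, r 1, …, r (d-1), r d = 1`. -/
def IsFTTRepAE {d : ℕ} (f : (Fin d → ℝ) → ℝ) (r : ℕ → ℕ)
    (γ : ∀ j : Fin d, Fin (r j.1) → ℝ → Fin (r (j.1 + 1)) → ℝ) : Prop :=
  r 0 = 1 ∧ r d = 1 ∧ (∀ j a b, Measurable fun t => γ j a t b) ∧
    ∀ᵐ x : Fin d → ℝ, f x = fttEval r γ x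

/-- The first `k` coordinates of `x : ℝ^d` (as an element of `ℝ^k`). -/
def firstCoords (d k : ℕ) (x : Fin d → ℝ) : Fin k → ℝ :=
  fun i => if h : i.1 < d then x ⟨i.1, h⟩ else 0

/-- The last `d - k` coordinates of `x : ℝ^d` (as an element of `ℝ^(d-k)`). -/
def lastCoords (d k : ℕ) (x : Fin d → ℝ) : Fin (d - k) → ℝ :=
  fun i => x ⟨k + i.1, by omega⟩

/-- `g : ℝ^d → ℝ` has `k`-separation rank at most `R`. -/
def HasSepRankLE {d : ℕ} (g : (Fin d → ℝ) → ℝ) (k R : ℕ) : Prop :=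
  ∃ (u : Fin R → (Fin k → ℝ) → ℝ) (v : Fin R → (Fin (d - k) → ℝ) → ℝ),
    (∀ j, MemLp (u j) 2 volume) ∧ (∀ j, MemLp (v j) 2 volume) ∧
    ∀ᵐ x : Fin d → ℝ, g x = ∑ j, u j (firstCoords d k x) * v j (lastCoords d k x)

/-- The unnormalized Gaussian density `f_Γ(x) = exp(-½ xᵀ Γ x)`. -/
def gaussDensity {d : ℕ} (Γ : Matrix (Fin d) (Fin d) ℝ) (x : Fin d → ℝ) : ℝ :=
  Real.exp (-(1 / 2) * (x ⬝ᵥ Γ.mulVec x))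

/-- The cube `[-a, a]^d ⊆ ℝ^d`. -/
def cube (d : ℕ) (a : ℝ) : Set (Fin d → ℝ) := Set.univ.pi fun _ => Set.Icc (-a) a

/-- The `k`-th subdiagonal block `A_k = (Γ_{ij})_{k+1 ≤ i ≤ d, 1 ≤ j ≤ k}` of a `d × d` matrix. -/
def subdiagBlock {d : ℕ} (Γ : Matrix (Fin d) (Fin d) ℝ) (k : ℕ) :
    Matrix (Fin (d - k)) (Fin k) ℝ :=
  fun i j => if h : j.1 < d then Γ ⟨k + i.1, by omega⟩ ⟨j.1, h⟩ else 0

/-- The singular values of a real matrix (in unspecified order):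
square roots of the eigenvalues of `Aᵀ * A`. -/
def singularValues {m k : ℕ} (A : Matrix (Fin m) (Fin k) ℝ) : Fin k → ℝ :=
  fun i => Real.sqrt ((show (Aᵀ * A).IsHermitian by
    have h := Matrix.isHermitian_conjTranspose_mul_self A
    rwa [Matrix.conjTranspose_eq_transpose_of_trivial] at h).eigenvalues i)

end
/-- Norm stability of replacing the exponential factors `f₁,…,f_κ` by
their interpolants `p₁,…,p_κ`: the `L²(Ω)` norm grows by at most `∏_{j≤κ}(1+ε_j)`. -/
theorem product_interpolation_stability {d : ℕ} (hd : 2 ≤ d) (a : ℝ) (ha : 0 < a)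
    (k : ℕ) (hk1 : 1 ≤ k) (hk2 : k ≤ d - 1) (l : ℕ) (hl : l ≤ min k (d - k))
    (σs : Fin l → ℝ) (hσs : ∀ j, 0 ≤ σs j)
    (f : Fin l → (Fin d → ℝ) → ℝ)
    (hf : ∀ (j : Fin l) (x : Fin d → ℝ),
      f j x = Real.exp (-σs j * x ⟨j.1, by omega⟩ * x ⟨k + j.1, by omega⟩))
    (p : Fin l → (Fin d → ℝ) → ℝ) (hpmeas : ∀ j, Measurable (p j))
    (hpbdd : ∀ j, ∃ M, ∀ x, |p j x| ≤ M)
    (δ : Fin l → ℝ) (hδ : ∀ j, δ j = ⨆ x : cube d a, |f j x.1 - p j x.1|) :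
    ∀ (fstar : (Fin d → ℝ) → ℝ),
      MemLp fstar 2 (volume.restrict (cube d a)) →
      ∀ κ : ℕ, κ ≤ l →
        eLpNorm (fun x => fstar x * ∏ j ∈ Finset.univ.filter (fun j : Fin l => j.1 < κ), p j x)
            2 (volume.restrict (cube d a)) ≤
          ENNReal.ofReal
              (∏ j ∈ Finset.univ.filter (fun j : Fin l => j.1 < κ),
                (1 + δ j * Real.exp (σs j * a ^ 2))) *
            eLpNorm (fun x => fstar x * ∏ j ∈ Finset.univ.filter (fun j : Fin l => j.1 < κ), f j x)
              2 (volume.restrict (cube d a)) := by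

  intro fstar hfstar κ hκ
  set s := Finset.univ.filter (fun j : Fin l => j.1 < κ) with hs
  have hcube : MeasurableSet (cube d a) :=
    MeasurableSet.univ_pi fun _ => measurableSet_Icc
  have hδ0 : ∀ j : Fin l, 0 ≤ δ j := by
    intro j; rw [hδ j]; exact Real.iSup_nonneg fun x => abs_nonneg _
  have hfac1 : ∀ j : Fin l, (1:ℝ) ≤ 1 + δ j * Real.exp (σs j * a ^ 2) := by
    intro j; nlinarith [hδ0 j, Real.exp_pos (σs j * a ^ 2)]
  set C := ∏ j ∈ s, (1 + δ j * Real.exp (σs j * a ^ 2)) with hC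
  have hC0 : 0 ≤ C := Finset.prod_nonneg fun j _ => by linarith [hfac1 j]
  -- bounds on f j on the cube
  have hbounds : ∀ x ∈ cube d a, ∀ j : Fin l,
      Real.exp (-(σs j * a ^ 2)) ≤ f j x ∧ f j x ≤ Real.exp (σs j * a ^ 2) := by
    intro x hx j
    have hxi : ∀ i : Fin d, |x i| ≤ a := by
      intro i
      have := hx i (Set.mem_univ i)
      exact abs_le.mpr ⟨this.1, this.2⟩
    have hprod : |x ⟨j.1, by omega⟩ * x ⟨k + j.1, by omega⟩| ≤ a ^ 2 := by
      rw [abs_mul]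
      calc |x ⟨j.1, by omega⟩| * |x ⟨k + j.1, by omega⟩| ≤ a * a :=
            mul_le_mul (hxi _) (hxi _) (abs_nonneg _) (le_of_lt ha)
        _ = a ^ 2 := (sq a).symm
    obtain ⟨hp1, hp2⟩ := abs_le.mp hprod
    rw [hf j x]
    constructor
    · apply Real.exp_le_exp.2
      nlinarith [hσs j]
    · apply Real.exp_le_exp.2
      nlinarith [hσs j]
  -- pointwise per-factor bound
  have hkey : ∀ x ∈ cube d a, ∀ j : Fin l,
      |p j x| ≤ (1 + δ j * Real.exp (σs j * a ^ 2)) * f j x := by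
    intro x hx j
    obtain ⟨hge, _⟩ := hbounds x hx j
    have hδle : |f j x - p j x| ≤ δ j := by
      rw [hδ j]
      obtain ⟨M, hM⟩ := hpbdd j
      refine le_ciSup_of_le ?_ (⟨x, hx⟩ : cube d a) le_rfl
      refine ⟨Real.exp (σs j * a ^ 2) + M, ?_⟩
      rintro y ⟨⟨z, hz⟩, rfl⟩
      obtain ⟨hz1, hz2⟩ := hbounds z hz j
      have hfz : 0 < f j z := lt_of_lt_of_le (Real.exp_pos _) hz1
      calc |f j z - p j z| ≤ |f j z| + |p j z| := abs_sub _ _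
        _ ≤ Real.exp (σs j * a ^ 2) + M := by
            have : |f j z| = f j z := abs_of_pos hfz
            rw [this]
            exact add_le_add hz2 (hM z)
    have h1 : (1:ℝ) ≤ Real.exp (σs j * a ^ 2) * f j x := by
      have := mul_le_mul_of_nonneg_left hge (le_of_lt (Real.exp_pos (σs j * a ^ 2)))
      rwa [← Real.exp_add, add_neg_cancel, Real.exp_zero] at this
    have habs : |p j x| ≤ δ j + f j x := by
      have h2 : |p j x| - |f j x| ≤ |p j x - f j x| := abs_sub_abs_le_abs_sub _ _
      have h3 : |p j x - f j x| = |f j x - p j x| := abs_sub_comm _ _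
      have h4 : |f j x| = f j x := abs_of_pos (lt_of_lt_of_le (Real.exp_pos _) hge)
      linarith
    nlinarith [hδ0 j, mul_le_mul_of_nonneg_left h1 (hδ0 j)]
  -- pointwise product bound
  have hmain : ∀ x ∈ cube d a,
      ‖fstar x * ∏ j ∈ s, p j x‖ ≤ C * ‖fstar x * ∏ j ∈ s, f j x‖ := by
    intro x hx
    have hfpos : ∀ j ∈ s, 0 ≤ f j x :=
      fun j _ => le_trans (le_of_lt (Real.exp_pos _)) (hbounds x hx j).1
    rw [Real.norm_eq_abs, Real.norm_eq_abs, abs_mul, abs_mul, Finset.abs_prod,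
      Finset.abs_prod]
    have hle : ∏ j ∈ s, |p j x| ≤ ∏ j ∈ s, ((1 + δ j * Real.exp (σs j * a ^ 2)) * f j x) :=
      Finset.prod_le_prod (fun j _ => abs_nonneg _) (fun j _ => hkey x hx j)
    rw [Finset.prod_mul_distrib, ← hC] at hle
    have h2 : ∏ j ∈ s, |f j x| = ∏ j ∈ s, f j x :=
      Finset.prod_congr rfl fun j hj => abs_of_nonneg (hfpos j hj)
    rw [h2]
    calc |fstar x| * ∏ j ∈ s, |p j x| ≤ |fstar x| * (C * ∏ j ∈ s, f j x) :=
          mul_le_mul_of_nonneg_left hle (abs_nonneg _)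
      _ = C * (|fstar x| * ∏ j ∈ s, f j x) := by ring
  calc eLpNorm (fun x => fstar x * ∏ j ∈ s, p j x) 2 (volume.restrict (cube d a))
      ≤ eLpNorm (fun x => C * (fstar x * ∏ j ∈ s, f j x)) 2 (volume.restrict (cube d a)) := by
        apply eLpNorm_mono_ae
        rw [ae_restrict_iff' hcube]
        filter_upwards with x hx
        rw [Real.norm_eq_abs (C * _), abs_mul, abs_of_nonneg hC0, ← Real.norm_eq_abs]
        exact hmain x hx
    _ = (‖C‖₊ : ENNReal) * eLpNorm (fun x => fstar x * ∏ j ∈ s, f j x) 2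
          (volume.restrict (cube d a)) := by
        rw [← enorm_eq_nnnorm, ← eLpNorm_const_smul C (fun x => fstar x * ∏ j ∈ s, f j x)]
        rfl
    _ = ENNReal.ofReal C * eLpNorm (fun x => fstar x * ∏ j ∈ s, f j x) 2
          (volume.restrict (cube d a)) := by
        congr 1
        exact (enorm_eq_nnnorm C).symm.trans (Real.enorm_eq_ofReal hC0)
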